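/- Let f : ℤ² → ℤ² be a group homomorphism with f ∘ f = id. Then either f is diagonalizable over ℤ (i.e., there is a basis of ℤ² consisting of eigenvectors of f with eigenvalues ±1), or f is conjugate over ℤ to the map swapping the two coordinates. -/

import Mathlib

private lemma colBasis (p q r s : ℤ) (h : p * s - q * r = 1 ∨ p * s - q * r = -1) :
    ∃ B : Module.Basis (Fin 2) ℤ (Fin 2 → ℤ), B 0 = ![p, q] ∧ B 1 = ![r, s] := by
  have hu : IsUnit (!![p, r; q, s]).det := by
    rw [Matrix.det_fin_two_of, Int.isUnit_iff]
    rcases h with h | h <;> [left; right] <;> linarith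
  have hi := (!![p, r; q, s]).invertibleOfIsUnitDet hu
  refine ⟨(Pi.basisFun ℤ (Fin 2)).map ((!![p, r; q, s]).toLinearEquiv' hi), ?_, ?_⟩ <;>
  · funext i
    fin_cases i <;>
      simp [Matrix.toLinearEquiv', Matrix.mulVec, dotProduct, Fin.sum_univ_two]

private lemma key (f : (Fin 2 → ℤ) →ₗ[ℤ] (Fin 2 → ℤ)) (hff : ∀ v, f (f v) = v)
    (u0 u1 r s : ℤ) (hdet : u0 * s - u1 * r = 1) (hu : f ![u0, u1] = ![u0, u1]) :
    (∃ (b : Module.Basis (Fin 2) ℤ (Fin 2 → ℤ)) (ε : Fin 2 → ℤ),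
        (∀ i, ε i = 1 ∨ ε i = -1) ∧ ∀ i, f (b i) = ε i • b i) ∨
    (∃ b : Module.Basis (Fin 2) ℤ (Fin 2 → ℤ), f (b 0) = b 1 ∧ f (b 1) = b 0) := by
  obtain ⟨α, β, hw⟩ : ∃ α β : ℤ, f ![r, s] = α • ![u0, u1] + β • ![r, s] := by
    refine ⟨s * f ![r, s] 0 - r * f ![r, s] 1, u0 * f ![r, s] 1 - u1 * f ![r, s] 0, ?_⟩
    funext i
    fin_cases i
    · simp only [Fin.zero_eta, Pi.add_apply, Pi.smul_apply, Matrix.cons_val_zero,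
        smul_eq_mul]
      linear_combination (-(f ![r, s] 0)) * hdet
    · simp only [Fin.mk_one, Pi.add_apply, Pi.smul_apply, Matrix.cons_val_one,
        Matrix.head_cons, smul_eq_mul, Matrix.cons_val_zero]
      linear_combination (-(f ![r, s] 1)) * hdet
  have hffw := hff ![r, s]
  rw [hw, map_add, map_smul, map_smul, hu, hw] at hffw
  have E0 := congrFun hffw 0
  have E1 := congrFun hffw 1
  simp only [Pi.add_apply, Pi.smul_apply, Matrix.cons_val_zero, Matrix.cons_val_one,
    Matrix.head_cons, smul_eq_mul] at E0 E1
  have hA : α * (1 + β) = 0 := by linear_combination s * E0 - r * E1 - (α * (1 + β)) * hdet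
  have hB : β * β = 1 := by linear_combination u0 * E1 - u1 * E0 - (β * β - 1) * hdet
  have hβ : β = 1 ∨ β = -1 := Int.isUnit_iff.mp (IsUnit.of_mul_eq_one (a := β) β hB)
  rcases hβ with hβ | hβ
  · -- β = 1 : α = 0, f fixes both basis vectors
    have hα0 : α = 0 := by subst hβ; linarith [hA]
    obtain ⟨B, hB0, hB1⟩ := colBasis u0 u1 r s (Or.inl hdet)
    refine Or.inl ⟨B, ![1, 1], by decide, ?_⟩
    intro i
    fin_cases i
    · show f (B 0) = (1 : ℤ) • B 0
      rw [hB0]; simpa using hu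
    · show f (B 1) = (1 : ℤ) • B 1
      rw [hB1, hw, hβ, hα0]
      funext j
      fin_cases j <;> simp
  · -- β = -1
    subst hβ
    obtain ⟨m, hm | hm⟩ := Int.even_or_odd' α
    · -- α = 2m : basis (u, w - m•u), eigenvalues (1, -1)
      obtain ⟨B, hB0, hB1⟩ := colBasis u0 u1 (r - m * u0) (s - m * u1)
        (Or.inl (by linear_combination hdet))
      refine Or.inl ⟨B, ![1, -1], by decide, ?_⟩
      have hv : (![r - m * u0, s - m * u1] : Fin 2 → ℤ) = ![r, s] - m • ![u0, u1] := by
        funext j; fin_cases j <;> simp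
      intro i
      fin_cases i
      · show f (B 0) = (1 : ℤ) • B 0
        rw [hB0]; simpa using hu
      · show f (B 1) = (-1 : ℤ) • B 1
        rw [hB1, hv, map_sub, map_smul, hu, hw]
        funext j
        fin_cases j
        · simp; linear_combination u0 * hm
        · simp; linear_combination u1 * hm
    · -- α = 2m + 1 : swap case, basis (w', u - w') with w' = w - m•u
      obtain ⟨B, hB0, hB1⟩ := colBasis (r - m * u0) (s - m * u1)
        (u0 - (r - m * u0)) (u1 - (s - m * u1))
        (Or.inr (by linear_combination (-(1:ℤ)) * hdet))
      refine Or.inr ⟨B, ?_, ?_⟩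
      · rw [hB0, hB1]
        have hv : (![r - m * u0, s - m * u1] : Fin 2 → ℤ) = ![r, s] - m • ![u0, u1] := by
          funext j; fin_cases j <;> simp
        rw [hv, map_sub, map_smul, hu, hw]
        funext j
        fin_cases j
        · simp; linear_combination u0 * hm
        · simp; linear_combination u1 * hm
      · rw [hB0, hB1]
        have hv : (![u0 - (r - m * u0), u1 - (s - m * u1)] : Fin 2 → ℤ) =
            ![u0, u1] - (![r, s] - m • ![u0, u1]) := by
          funext j; fin_cases j <;> simp
        rw [hv, map_sub, map_sub, map_smul, hu, hw]
        funext j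
        fin_cases j
        · simp; linear_combination (-u0) * hm
        · simp; linear_combination (-u1) * hm


-- from a nonzero fixed vector, produce a primitive fixed vector with a Bezout complement
private lemma prim (f : (Fin 2 → ℤ) →ₗ[ℤ] (Fin 2 → ℤ))
    (y0 y1 : ℤ) (hy : ¬(y0 = 0 ∧ y1 = 0)) (hfy : f ![y0, y1] = ![y0, y1]) :
    ∃ u0 u1 r s : ℤ, u0 * s - u1 * r = 1 ∧ f ![u0, u1] = ![u0, u1] := by
  set g : ℕ := Int.gcd y0 y1 with hg
  have hgne : (g : ℤ) ≠ 0 := by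
    simp only [hg, ne_eq, Int.natCast_eq_zero, Int.gcd_eq_zero_iff]
    exact hy
  have hd0 : (g : ℤ) ∣ y0 := Int.gcd_dvd_left y0 y1
  have hd1 : (g : ℤ) ∣ y1 := Int.gcd_dvd_right y0 y1
  set u0 : ℤ := y0 / g with hu0
  set u1 : ℤ := y1 / g with hu1
  have hy0 : y0 = g * u0 := (Int.mul_ediv_cancel' hd0).symm
  have hy1 : y1 = g * u1 := (Int.mul_ediv_cancel' hd1).symm
  have hcop : IsCoprime u0 u1 := by
    rw [Int.isCoprime_iff_gcd_eq_one]
    exact Int.gcd_div_gcd_div_gcd (Nat.pos_of_ne_zero (by exact_mod_cast hgne))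
  obtain ⟨p, q, hpq⟩ := hcop
  have hvec : (![y0, y1] : Fin 2 → ℤ) = (g : ℤ) • ![u0, u1] := by
    funext j; fin_cases j <;> simp [hy0, hy1]
  have hfu : f ![u0, u1] = ![u0, u1] := by
    have h2 : (g : ℤ) • f ![u0, u1] = (g : ℤ) • ![u0, u1] := by
      rw [← map_smul, ← hvec, hfy, hvec]
    exact smul_right_injective (Fin 2 → ℤ) hgne h2
  exact ⟨u0, u1, -q, p, by linarith, hfu⟩

/-- An involution of `ℤ²` is either diagonalizable over `ℤ` (there is a basis of
eigenvectors with eigenvalues `±1`) or conjugate over `ℤ` to the coordinate swap. -/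
theorem involution_of_Zsq_diagonalizable_or_swap
    (f : (Fin 2 → ℤ) →ₗ[ℤ] (Fin 2 → ℤ)) (hf : f ∘ₗ f = LinearMap.id) :
    (∃ (b : Module.Basis (Fin 2) ℤ (Fin 2 → ℤ)) (ε : Fin 2 → ℤ),
        (∀ i, ε i = 1 ∨ ε i = -1) ∧ ∀ i, f (b i) = ε i • b i) ∨
    (∃ b : Module.Basis (Fin 2) ℤ (Fin 2 → ℤ), f (b 0) = b 1 ∧ f (b 1) = b 0) := by
  have hff : ∀ v, f (f v) = v := fun v => by
    have := LinearMap.ext_iff.mp hf v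
    simpa using this
  set a : ℤ := f ![1, 0] 0 with ha
  set c : ℤ := f ![1, 0] 1 with hc
  set b : ℤ := f ![0, 1] 0 with hb
  set d : ℤ := f ![0, 1] 1 with hd
  have hsplit : ∀ x y : ℤ, f ![x, y] = ![a * x + b * y, c * x + d * y] := by
    intro x y
    have hxy : (![x, y] : Fin 2 → ℤ) = x • ![1, 0] + y • ![0, 1] := by
      funext j; fin_cases j <;> simp
    rw [hxy, map_add, map_smul, map_smul]
    funext j
    fin_cases j <;> simp [ha, hb, hc, hd] <;> ring
  have hc10 : f ![(1 : ℤ), 0] = ![a, c] := by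
    funext j; fin_cases j <;> simp [ha, hc]
  have hc01 : f ![(0 : ℤ), 1] = ![b, d] := by
    funext j; fin_cases j <;> simp [hb, hd]
  have h1 := hff ![1, 0]
  rw [hc10, hsplit] at h1
  have h2 := hff ![0, 1]
  rw [hc01, hsplit] at h2
  have e1 : a * a + b * c = 1 := by simpa using congrFun h1 0
  have e3 : c * a + d * c = 0 := by simpa using congrFun h1 1
  have e2 : a * b + b * d = 0 := by simpa using congrFun h2 0
  have e4 : c * b + d * d = 1 := by simpa using congrFun h2 1
  by_cases hbc : b = 0 ∧ c = 0
  · -- diagonal matrix already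
    obtain ⟨hb0, hc0⟩ := hbc
    have ha1 : a = 1 ∨ a = -1 := by
      have : a * a = 1 := by rw [hb0] at e1; linarith
      exact Int.isUnit_iff.mp (IsUnit.of_mul_eq_one (a := a) a this)
    have hd1 : d = 1 ∨ d = -1 := by
      have : d * d = 1 := by rw [hb0] at e4; linarith
      exact Int.isUnit_iff.mp (IsUnit.of_mul_eq_one (a := d) d this)
    refine Or.inl ⟨Pi.basisFun ℤ (Fin 2), ![a, d], ?_, ?_⟩
    · intro i
      fin_cases i
      · simpa using ha1
      · simpa using hd1
    · have hbf0 : (Pi.basisFun ℤ (Fin 2)) 0 = ![(1 : ℤ), 0] := by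
        funext j; fin_cases j <;> simp
      have hbf1 : (Pi.basisFun ℤ (Fin 2)) 1 = ![(0 : ℤ), 1] := by
        funext j; fin_cases j <;> simp
      intro i
      fin_cases i
      · show f ((Pi.basisFun ℤ (Fin 2)) 0) = a • (Pi.basisFun ℤ (Fin 2)) 0
        rw [hbf0, hc10, hc0]
        funext j; fin_cases j <;> simp
      · show f ((Pi.basisFun ℤ (Fin 2)) 1) = d • (Pi.basisFun ℤ (Fin 2)) 1
        rw [hbf1, hc01, hb0]
        funext j; fin_cases j <;> simp
  · -- off-diagonal: trace is zero
    have had : a + d = 0 := by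
      rcases (not_and_or.mp hbc) with h | h
      · have : b * (a + d) = 0 := by linarith
        rcases mul_eq_zero.mp this with h' | h'
        · exact absurd h' h
        · exact h'
      · have : c * (a + d) = 0 := by linarith
        rcases mul_eq_zero.mp this with h' | h'
        · exact absurd h' h
        · exact h'
    by_cases h1' : a = -1 ∧ c = 0
    · -- use y = (b, 1 - a) = (b, 2)
      have hbne : b ≠ 0 := fun hb0 => hbc ⟨hb0, h1'.2⟩
      have hfy : f ![b, 1 - a] = ![b, 1 - a] := by
        rw [hsplit]
        funext j
        fin_cases j
        · simp; ring
        · simp; linear_combination e4 + (1 - d) * had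
      obtain ⟨u0, u1, r, s, hdet, hfu⟩ := prim f b (1 - a) (fun h => hbne h.1) hfy
      exact key f hff u0 u1 r s hdet hfu
    · -- use y = (a + 1, c)
      have hyne : ¬(a + 1 = 0 ∧ c = 0) := by
        intro h
        exact h1' ⟨by linarith [h.1], h.2⟩
      have hfy : f ![a + 1, c] = ![a + 1, c] := by
        rw [hsplit]
        funext j
        fin_cases j
        · simp; linear_combination e1
        · simp; linear_combination c * had
      obtain ⟨u0, u1, r, s, hdet, hfu⟩ := prim f (a + 1) c hyne hfy
      exact key f hff u0 u1 r s hdet hfu
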